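/- Let k be a field of characteristic different from 2, R = k[X]/(X²), ε the image of X, and let ρ : SL₂(R) → SL₂(k) be the homomorphism induced by ε ↦ 0. Let S = {g ∈ SL₂(R) : ρ(g) = (δ, y; 0, δ) for some δ ∈ {1, −1} and y ∈ k}. Then the commutator subgroup of S equals {(1+xε, yε; 0, 1−xε) : x, y ∈ k}. -/

import Mathlib

open Matrix TrivSqZeroExt

/-- The reduction homomorphism `SL₂(k[X]/(X²)) → SL₂(k)` induced by `ε ↦ 0`. -/
noncomputable def rho (k : Type) [Field k] :
    Matrix.SpecialLinearGroup (Fin 2) (DualNumber k) →* Matrix.SpecialLinearGroup (Fin 2) k :=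
  Matrix.SpecialLinearGroup.map (TrivSqZeroExt.fstHom k k k).toRingHom

section Aux

variable (k : Type) [Field k]

open scoped commutatorElement

/-- Characterization of the target set. -/
theorem memChar (g : Matrix.SpecialLinearGroup (Fin 2) (DualNumber k)) :
    (rho k g = 1 ∧ g.val 1 0 = 0) ↔
      ∃ x y : k, g.val = !![1 + inl x * DualNumber.eps, inl y * DualNumber.eps;
          0, 1 - inl x * DualNumber.eps] := by
  constructor
  · rintro ⟨h1, h10⟩
    have hf : ∀ i j, fst (g.val i j) = (1 : Matrix (Fin 2) (Fin 2) k) i j := by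
      intro i j
      have h1' : (rho k g).val = (1 : Matrix.SpecialLinearGroup (Fin 2) k).val := by rw [h1]
      have := congrFun (congrFun h1' i) j
      exact this
    have hf00 : fst (g.val 0 0) = 1 := by simpa using hf 0 0
    have hf01 : fst (g.val 0 1) = 0 := by simpa using hf 0 1
    have hf11 : fst (g.val 1 1) = 1 := by simpa using hf 1 1
    have hdet : g.val.det = 1 := g.prop
    rw [Matrix.det_fin_two, h10, mul_zero, sub_zero] at hdet
    have hsnd : snd (g.val 1 1) = - snd (g.val 0 0) := by
      have h := congrArg snd hdet
      rw [DualNumber.snd_mul, hf00, hf11] at h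
      simp at h
      linear_combination h
    refine ⟨snd (g.val 0 0), snd (g.val 0 1), ?_⟩
    have e00 : g.val 0 0 = 1 + inl (snd (g.val 0 0)) * DualNumber.eps :=
      TrivSqZeroExt.ext (by simpa using hf00) (by simp)
    have e01 : g.val 0 1 = inl (snd (g.val 0 1)) * DualNumber.eps :=
      TrivSqZeroExt.ext (by simpa using hf01) (by simp)
    have e11 : g.val 1 1 = 1 - inl (snd (g.val 0 0)) * DualNumber.eps :=
      TrivSqZeroExt.ext (by simpa using hf11) (by simpa using hsnd)
    rw [Matrix.eta_fin_two g.val, e00, e01, h10, e11]; simp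
  · rintro ⟨x, y, hg⟩
    constructor
    · ext i j
      show fst (g.val i j) = _
      rw [hg]
      fin_cases i <;> fin_cases j <;> simp [Matrix.SpecialLinearGroup.coe_one]
    · rw [hg]; simp

/-- The target set as a subgroup. -/
noncomputable def Hgrp : Subgroup (Matrix.SpecialLinearGroup (Fin 2) (DualNumber k)) where
  carrier := {g | rho k g = 1 ∧ g.val 1 0 = 0}
  one_mem' := ⟨map_one _, by simp [Matrix.SpecialLinearGroup.coe_one, Matrix.one_apply]⟩
  mul_mem' := by
    rintro a b ⟨ha1, ha2⟩ ⟨hb1, hb2⟩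
    refine ⟨by rw [_root_.map_mul, ha1, hb1, mul_one], ?_⟩
    show (a.val * b.val) 1 0 = 0
    rw [Matrix.mul_apply, Fin.sum_univ_two, ha2, hb2]
    simp
  inv_mem' := by
    rintro a ⟨ha1, ha2⟩
    refine ⟨by rw [_root_.map_inv, ha1, inv_one], ?_⟩
    rw [Matrix.SpecialLinearGroup.coe_inv, Matrix.adjugate_fin_two]
    simp [ha2]

set_option maxHeartbeats 1000000 in
/-- Commutators of elements of `S` lie in the target set. -/
theorem comm_mem (s t : Matrix.SpecialLinearGroup (Fin 2) (DualNumber k))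
    (δ y δ' y' : k)
    (hs : (rho k s).val = !![δ, y; 0, δ]) (ht : (rho k t).val = !![δ', y'; 0, δ']) :
    rho k (s * t * s⁻¹ * t⁻¹) = 1 ∧ ((s * t * s⁻¹ * t⁻¹).val) 1 0 = 0 := by
  constructor
  · have hc : Commute (rho k s) (rho k t) := by
      apply Subtype.ext
      show (rho k s).val * (rho k t).val = (rho k t).val * (rho k s).val
      rw [hs, ht]
      apply Matrix.ext; intro i j
      fin_cases i <;> fin_cases j <;> simp [Matrix.mul_apply, Fin.sum_univ_two] <;> ring
    have : s * t * s⁻¹ * t⁻¹ = ⁅s, t⁆ := by rw [commutatorElement_def]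
    rw [this, _root_.map_commutatorElement, commutatorElement_eq_one_iff_commute]
    exact hc
  · have hfs : ∀ i j, fst (s.val i j) = !![δ, y; 0, δ] i j := fun i j =>
      congrFun (congrFun hs i) j
    have hft : ∀ i j, fst (t.val i j) = !![δ', y'; 0, δ'] i j := fun i j =>
      congrFun (congrFun ht i) j
    have hs00 : fst (s.val 0 0) = δ := by simpa using hfs 0 0
    have hs01 : fst (s.val 0 1) = y := by simpa using hfs 0 1
    have hs10 : fst (s.val 1 0) = 0 := by simpa using hfs 1 0
    have hs11 : fst (s.val 1 1) = δ := by simpa using hfs 1 1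
    have ht00 : fst (t.val 0 0) = δ' := by simpa using hft 0 0
    have ht01 : fst (t.val 0 1) = y' := by simpa using hft 0 1
    have ht10 : fst (t.val 1 0) = 0 := by simpa using hft 1 0
    have ht11 : fst (t.val 1 1) = δ' := by simpa using hft 1 1
    have key : (s.val * t.val * ((s⁻¹).val * (t⁻¹).val)) 1 0 = 0 := by
      rw [Matrix.SpecialLinearGroup.coe_inv, Matrix.SpecialLinearGroup.coe_inv,
        ← Matrix.adjugate_mul_distrib, Matrix.adjugate_fin_two (t.val * s.val)]
      set A := s.val * t.val with hA
      set B := t.val * s.val with hB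
      have hA10 : A 1 0 = s.val 1 0 * t.val 0 0 + s.val 1 1 * t.val 1 0 := by
        rw [hA, Matrix.mul_apply, Fin.sum_univ_two]
      have hA11 : A 1 1 = s.val 1 0 * t.val 0 1 + s.val 1 1 * t.val 1 1 := by
        rw [hA, Matrix.mul_apply, Fin.sum_univ_two]
      have hB10 : B 1 0 = t.val 1 0 * s.val 0 0 + t.val 1 1 * s.val 1 0 := by
        rw [hB, Matrix.mul_apply, Fin.sum_univ_two]
      have hB11 : B 1 1 = t.val 1 0 * s.val 0 1 + t.val 1 1 * s.val 1 1 := by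
        rw [hB, Matrix.mul_apply, Fin.sum_univ_two]
      have : (A * !![B 1 1, -(B 0 1); -(B 1 0), B 0 0]) 1 0
          = A 1 0 * B 1 1 - A 1 1 * B 1 0 := by
        rw [Matrix.mul_apply, Fin.sum_univ_two]
        simp [mul_comm]
        ring
      rw [this, hA10, hA11, hB10, hB11]
      apply TrivSqZeroExt.ext <;>
        simp only [fst_mul, fst_add, fst_sub, snd_add, snd_sub, DualNumber.snd_mul,
          hs00, hs01, hs10, hs11, ht00, ht01, ht10, ht11, fst_zero, snd_zero] <;>
        ring
    calc ((s * t * s⁻¹ * t⁻¹).val) 1 0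
        = (s.val * t.val * ((s⁻¹).val * (t⁻¹).val)) 1 0 := by
          rw [mul_assoc]; rfl
      _ = 0 := key

def sElt : Matrix.SpecialLinearGroup (Fin 2) (DualNumber k) :=
  ⟨!![1, 1; 0, 1], by simp [Matrix.det_fin_two]⟩

def tElt (a x : k) : Matrix.SpecialLinearGroup (Fin 2) (DualNumber k) :=
  ⟨!![1 + inl a * DualNumber.eps, 0; inl x * DualNumber.eps, 1 - inl a * DualNumber.eps], by
    rw [Matrix.det_fin_two]
    apply TrivSqZeroExt.ext <;> simp⟩

theorem rho_sElt : (rho k (sElt k)).val = !![(1:k), 1; 0, 1] := by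
  ext i j
  show fst ((sElt k).val i j) = _
  fin_cases i <;> fin_cases j <;> simp [sElt]

theorem rho_tElt (a x : k) : (rho k (tElt k a x)).val = !![(1:k), 0; 0, 1] := by
  ext i j
  show fst ((tElt k a x).val i j) = _
  fin_cases i <;> fin_cases j <;> simp [tElt]

theorem comm_eq (hchar : ringChar k ≠ 2) (x y : k) :
    ((sElt k * tElt k (-(x+y)/2) x * (sElt k)⁻¹ * (tElt k (-(x+y)/2) x)⁻¹).val) =
      !![1 + inl x * DualNumber.eps, inl y * DualNumber.eps;
          0, 1 - inl x * DualNumber.eps] := by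
  have h2 : (2:k) ≠ 0 := Ring.two_ne_zero hchar
  show (sElt k).val * (tElt k (-(x+y)/2) x).val * ((sElt k)⁻¹).val *
      ((tElt k (-(x+y)/2) x)⁻¹).val = _
  rw [Matrix.SpecialLinearGroup.coe_inv, Matrix.SpecialLinearGroup.coe_inv,
    Matrix.adjugate_fin_two, Matrix.adjugate_fin_two]
  apply Matrix.ext; intro i j
  fin_cases i <;> fin_cases j <;>
    apply TrivSqZeroExt.ext <;>
    · simp [sElt, tElt, Matrix.mul_apply, Fin.sum_univ_two, DualNumber.snd_mul]
      try field_simp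
      try ring

end Aux

theorem stmt12 (k : Type) [Field k] (hchar : ringChar k ≠ 2)
    -- `S = {g ∈ SL₂(R) : ρ(g) = (δ, y; 0, δ), δ = ±1, y ∈ k}`
    (S : Set (Matrix.SpecialLinearGroup (Fin 2) (DualNumber k)))
    (hS : S = {g | ∃ δ y : k, (δ = 1 ∨ δ = -1) ∧ (rho k g).val = !![δ, y; 0, δ]}) :
    -- the commutator subgroup of `S`, i.e. the subgroup generated by all commutators
    -- `s t s⁻¹ t⁻¹` with `s, t ∈ S`, equals `{(1+xε, yε; 0, 1−xε) : x, y ∈ k}`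
    (Subgroup.closure {c | ∃ s ∈ S, ∃ t ∈ S, c = s * t * s⁻¹ * t⁻¹} :
        Set (Matrix.SpecialLinearGroup (Fin 2) (DualNumber k))) =
      {g | ∃ x y : k, g.val = !![1 + inl x * DualNumber.eps, inl y * DualNumber.eps;
          0, 1 - inl x * DualNumber.eps]} := by
  have key : Subgroup.closure {c | ∃ s ∈ S, ∃ t ∈ S, c = s * t * s⁻¹ * t⁻¹} = Hgrp k := by
    apply le_antisymm
    · rw [Subgroup.closure_le]
      rintro c ⟨s, hsS, t, htS, rfl⟩
      rw [hS] at hsS htS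
      obtain ⟨δ, y, _, hs⟩ := hsS
      obtain ⟨δ', y', _, ht⟩ := htS
      exact comm_mem k s t δ y δ' y' hs ht
    · intro g hg
      obtain ⟨x, y, hval⟩ := (memChar k g).mp hg
      apply Subgroup.subset_closure
      refine ⟨sElt k, ?_, tElt k (-(x+y)/2) x, ?_, ?_⟩
      · rw [hS]; exact ⟨1, 1, Or.inl rfl, rho_sElt k⟩
      · rw [hS]; exact ⟨1, 0, Or.inl rfl, rho_tElt k _ _⟩
      · exact Subtype.ext (hval.trans (comm_eq k hchar x y).symm)
  rw [key]
  ext g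
  exact memChar k g
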